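/- Let k, l be natural numbers, let x₀ ∈ X satisfy T^k(x₀) = T^l(x₀), and let f : X → ℂ be continuous. Then ⟨M̃_f S̃^k (S̃*)^l M̃_f e_{(x₀,l)}, e_{(x₀,k)}⟩ = f(x₀)²·(I_k(x₀)·I_l(x₀))^{-1/2}. Consequently, if moreover k ≠ l and f(x₀) ≠ 0, then M̃_f S̃^k (S̃*)^l M̃_f ≠ M̃_h for every continuous function h : X → ℂ (since ⟨M̃_h e_{(x₀,l)}, e_{(x₀,k)}⟩ = 0 when k ≠ l). -/

import Mathlib

open Classical

noncomputable section

/-- `ℓ²(X×ℤ)`: the Hilbert space of square-summable complex families indexed by `X × ℤ`. -/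
abbrev l2Z (X : Type*) : Type _ := lp (fun _ : X × ℤ => ℂ) 2

/-- The orthonormal basis vector `e_{(x,n)}` of `ℓ²(X×ℤ)`. -/
def e {X : Type*} (p : X × ℤ) : l2Z X := lp.single 2 p 1

/-- `I_k(x) = ∏_{j=1}^{k} ℒ(1)(T^j(x))`, where `ℒ(1)(x) = card (T⁻¹({x}))`
(with `I_0 = 1`). -/
def Ik {X : Type*} (T : X → X) (k : ℕ) (x : X) : ℝ :=
  ∏ j ∈ Finset.range k, (Nat.card (T ⁻¹' {T^[j + 1] x}) : ℝ)

end

section aux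

variable {X : Type*} [TopologicalSpace X] [CompactSpace X] [T2Space X] {T : X → X}

lemma fiber_finite (hT : IsCoveringMap T) (x : X) : (T ⁻¹' {x}).Finite := by
  have hd : DiscreteTopology (T ⁻¹' {x} : Set X) := (hT x).1
  have hc : IsClosed (T ⁻¹' {x}) := isClosed_singleton.preimage hT.continuous
  exact hc.isCompact.finite ⟨hd⟩

lemma e_apply {Y : Type*} (p q : Y × ℤ) : (e p : ∀ _ : Y × ℤ, ℂ) q = if q = p then 1 else 0 := by
  by_cases h : q = p
  · simp [e, h, lp.single_apply_self]
  · simp [e, lp.single_apply_ne 2 p _ h, h]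

lemma coord {Y : Type*} (u : l2Z Y) (p : Y × ℤ) : @inner ℂ _ _ (e p) u = u p := by
  classical
  rw [e, lp.inner_single_left]
  simp

omit [TopologicalSpace X] [CompactSpace X] [T2Space X] in
lemma Ik_nonneg (T : X → X) (k : ℕ) (x : X) : 0 ≤ Ik T k x :=
  Finset.prod_nonneg fun _ _ => by positivity

end aux


set_option maxHeartbeats 1000000 in
open ContinuousLinearMap in
/-- Let `X` be a compact Hausdorff space, `T : X → X` a covering map and
`S̃` the bounded operator on `ℓ²(X×ℤ)` with
`S̃ e_{(x,n)} = (ℒ(1)(x))^{-1/2} ∑_{y ∈ T⁻¹({x})} e_{(y,n+1)}`. Let `k, l ∈ ℕ`, let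
`x₀ ∈ X` satisfy `T^k(x₀) = T^l(x₀)` and let `f : X → ℂ` be continuous. Then
`⟨M̃_f S̃^k (S̃*)^l M̃_f e_{(x₀,l)}, e_{(x₀,k)}⟩ = f(x₀)²·(I_k(x₀)·I_l(x₀))^{-1/2}`
(the paper's inner product is linear in the first variable, so it is rendered as
Mathlib's `inner` with arguments swapped). Consequently, if `k ≠ l` and `f(x₀) ≠ 0`, then
`M̃_f S̃^k (S̃*)^l M̃_f ≠ M̃_h` for every continuous `h : X → ℂ`. -/
theorem off_diagonal_entry_and_not_multiplication {X : Type*} [TopologicalSpace X]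
    [CompactSpace X] [T2Space X] (T : X → X) (hT : IsCoveringMap T)
    (hTsurj : Function.Surjective T)
    (St : l2Z X →L[ℂ] l2Z X)
    (hSt : ∀ (x : X) (n : ℤ), St (e (x, n)) =
      (((Real.sqrt (Nat.card (T ⁻¹' {x})))⁻¹ : ℝ) : ℂ) • ∑ᶠ y ∈ T ⁻¹' {x}, e (y, n + 1))
    (k l : ℕ) (x₀ : X) (hx₀ : T^[k] x₀ = T^[l] x₀)
    (f : C(X, ℂ)) (Mf : l2Z X →L[ℂ] l2Z X)
    (hMf : ∀ p : X × ℤ, Mf (e p) = f p.1 • e p) :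
    @inner ℂ _ _ (e (x₀, (k : ℤ)))
        ((Mf ∘L (St ^ k) ∘L ((adjoint St) ^ l) ∘L Mf) (e (x₀, (l : ℤ)))) =
      f x₀ ^ 2 * (((Real.sqrt (Ik T k x₀ * Ik T l x₀))⁻¹ : ℝ) : ℂ) ∧
    (k ≠ l → f x₀ ≠ 0 →
      ∀ h : C(X, ℂ), ∀ Mh : l2Z X →L[ℂ] l2Z X,
        (∀ p : X × ℤ, Mh (e p) = h p.1 • e p) →
        Mf ∘L (St ^ k) ∘L ((adjoint St) ^ l) ∘L Mf ≠ Mh) := by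
  classical
  -- rewrite the finsum in hSt as a Finset sum
  have hSt' : ∀ (x : X) (n : ℤ), St (e (x, n)) =
      (((Real.sqrt (Nat.card (T ⁻¹' {x})))⁻¹ : ℝ) : ℂ) •
        ∑ y ∈ (fiber_finite hT x).toFinset, e (y, n + 1) := by
    intro x n
    rw [hSt x n]
    congr 1
    rw [← finsum_mem_coe_finset, Set.Finite.coe_toFinset]
  -- Step 1: the adjoint of St on basis vectors
  have hadj : ∀ (x : X) (n : ℤ), (adjoint St) (e (x, n)) =
      (((Real.sqrt (Nat.card (T ⁻¹' {T x})))⁻¹ : ℝ) : ℂ) • e (T x, n - 1) := by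
    intro x n
    refine lp.ext (funext fun q => ?_)
    obtain ⟨z, m⟩ := q
    have h1 : ((adjoint St) (e (x, n))) (z, m) =
        @inner ℂ _ _ (St (e (z, m))) (e (x, n)) := by
      rw [← coord, adjoint_inner_right]
    rw [h1, hSt' z m, inner_smul_left, sum_inner]
    have h2 : ∀ y ∈ (fiber_finite hT z).toFinset,
        @inner ℂ _ _ (e (y, m + 1)) (e ((x, n) : X × ℤ)) = if (y, m + 1) = ((x, n) : X × ℤ) then 1 else 0 := by
      intro y _
      rw [coord, e_apply]
    rw [Finset.sum_congr rfl h2]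
    rw [lp.coeFn_smul, Pi.smul_apply, e_apply]
    by_cases hm : m + 1 = n
    · have h3 : ∀ y : X, ((y, m + 1) = ((x, n) : X × ℤ)) ↔ y = x := by
        intro y; constructor
        · intro hy; exact (Prod.ext_iff.mp hy).1
        · intro hy; exact Prod.ext hy hm
      simp only [h3]
      rw [Finset.sum_ite_eq' (fiber_finite hT z).toFinset x (fun _ => (1 : ℂ))]
      by_cases hx : T x = z
      · have hxin : x ∈ (fiber_finite hT z).toFinset := by
          simp [Set.Finite.mem_toFinset, Set.mem_preimage, hx]
        have hzq : ((z, m) : X × ℤ) = (T x, n - 1) := by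
          rw [Prod.ext_iff]; constructor
          · exact hx.symm
          · omega
        rw [if_pos hxin, if_pos hzq, hx]
        simp [Complex.conj_ofReal]
      · have hxnin : x ∉ (fiber_finite hT z).toFinset := by
          simp [Set.Finite.mem_toFinset, Set.mem_preimage, hx]
        have hzq : ((z, m) : X × ℤ) ≠ (T x, n - 1) := by
          intro hh; exact hx ((Prod.ext_iff.mp hh).1.symm)
        rw [if_neg hxnin, if_neg hzq]
        simp
    · have h3 : ∀ y ∈ (fiber_finite hT z).toFinset,
          (if (y, m + 1) = ((x, n) : X × ℤ) then (1:ℂ) else 0) = 0 := by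
        intro y _
        rw [if_neg]
        intro hh; exact hm (Prod.ext_iff.mp hh).2
      have hzq : ((z, m) : X × ℤ) ≠ (T x, n - 1) := by
        intro hh
        have := (Prod.ext_iff.mp hh).2
        omega
      rw [Finset.sum_congr rfl h3, Finset.sum_const_zero, if_neg hzq]
      simp
  -- multiplicativity of Ik at succ
  have hIk : ∀ (j : ℕ) (x : X), Ik T (j + 1) x =
      Ik T j (T x) * (Nat.card (T ⁻¹' {T x}) : ℝ) := by
    intro j x
    rw [Ik, Ik, Finset.prod_range_succ']
    simp [Function.iterate_succ_apply]
  -- Step 2: iterated adjoint on basis vectors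
  have hadjpow : ∀ (j : ℕ) (x : X) (n : ℤ), ((adjoint St) ^ j) (e (x, n)) =
      (((Real.sqrt (Ik T j x))⁻¹ : ℝ) : ℂ) • e (T^[j] x, n - j) := by
    intro j
    induction j with
    | zero => intro x n; simp [Ik]
    | succ j ih =>
      intro x n
      rw [pow_succ, ContinuousLinearMap.mul_apply, hadj x n, map_smul, ih (T x) (n - 1), hIk j x, smul_smul]
      rw [Real.sqrt_mul (Ik_nonneg T j (T x)), mul_inv]
      have h1 : T^[j] (T x) = T^[j + 1] x := (Function.iterate_succ_apply T j x).symm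
      have h2 : n - 1 - (j : ℤ) = n - ((j : ℕ) + 1 : ℕ) := by push_cast; ring
      rw [h1, h2]
      push_cast
      ring_nf
  -- Step 3: the adjoint of Mf on basis vectors
  have hadjMf : ∀ p : X × ℤ, (adjoint Mf) (e p) = (starRingEnd ℂ) (f p.1) • e p := by
    intro p
    refine lp.ext (funext fun q => ?_)
    have h1 : ((adjoint Mf) (e p)) q = @inner ℂ _ _ (Mf (e q)) (e p) := by
      rw [← coord, adjoint_inner_right]
    rw [h1, hMf q, inner_smul_left, coord, lp.coeFn_smul, Pi.smul_apply, e_apply]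
    by_cases hq : q = p
    · subst hq; simp [smul_eq_mul]
    · simp [hq]
  -- the main inner product computation
  have key : @inner ℂ _ _ (e (x₀, (k : ℤ)))
        ((Mf ∘L (St ^ k) ∘L ((adjoint St) ^ l) ∘L Mf) (e (x₀, (l : ℤ)))) =
      f x₀ ^ 2 * (((Real.sqrt (Ik T k x₀ * Ik T l x₀))⁻¹ : ℝ) : ℂ) := by
    rw [comp_apply, comp_apply, comp_apply]
    rw [hMf (x₀, (l : ℤ)), map_smul, hadjpow l x₀ (l : ℤ)]
    have hl0 : (l : ℤ) - (l : ℕ) = 0 := by simp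
    rw [hl0]
    simp only [map_smul, inner_smul_right]
    have h1 : @inner ℂ _ _ (e (x₀, (k : ℤ))) (Mf ((St ^ k) (e (T^[l] x₀, 0)))) =
        @inner ℂ _ _ ((adjoint (St ^ k)) ((adjoint Mf) (e (x₀, (k : ℤ))))) (e (T^[l] x₀, 0)) := by
      rw [adjoint_inner_left, adjoint_inner_left]
    rw [h1, hadjMf, map_smul]
    have h2 : adjoint (St ^ k) = (adjoint St) ^ k := by
      rw [← star_eq_adjoint, ← star_eq_adjoint, star_pow]
    rw [h2, hadjpow k x₀ (k : ℤ)]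
    have hk0 : (k : ℤ) - (k : ℕ) = 0 := by simp
    rw [hk0, smul_smul, inner_smul_left, hx₀]

    have h3 : @inner ℂ _ _ (e ((T^[l] x₀, 0) : X × ℤ)) (e ((T^[l] x₀, 0) : X × ℤ)) = 1 := by
      rw [coord, e_apply, if_pos rfl]
    rw [h3]
    have hck : ((((Real.sqrt (Ik T k x₀))⁻¹ : ℝ) : ℂ)).im = 0 := by simp
    rw [Real.sqrt_mul (Ik_nonneg T k x₀), mul_inv]
    push_cast
    simp only [map_mul, map_inv₀, Complex.conj_conj, Complex.conj_ofReal]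
    ring
  refine ⟨key, ?_⟩
  intro hkl hf h Mh hMh heq
  rw [heq] at key
  rw [hMh (x₀, (l : ℤ)), inner_smul_right, coord, e_apply] at key
  have hne : ((x₀, (k : ℤ)) : X × ℤ) ≠ (x₀, (l : ℤ)) := by
    intro hh
    exact hkl (Nat.cast_injective (Prod.ext_iff.mp hh).2)
  rw [if_neg hne, mul_zero] at key
  -- the right-hand side is nonzero
  have hIpos : ∀ j : ℕ, 0 < Ik T j x₀ := by
    intro j
    refine Finset.prod_pos fun i _ => ?_
    have hfin : Finite (T ⁻¹' {T^[i + 1] x₀} : Set X) := (fiber_finite hT _).to_subtype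
    have hne : Nonempty (T ⁻¹' {T^[i + 1] x₀} : Set X) := by
      obtain ⟨y, hy⟩ := hTsurj (T^[i + 1] x₀)
      exact ⟨⟨y, hy⟩⟩
    exact_mod_cast Nat.card_pos
  have : f x₀ ^ 2 * (((Real.sqrt (Ik T k x₀ * Ik T l x₀))⁻¹ : ℝ) : ℂ) ≠ 0 := by
    apply mul_ne_zero (pow_ne_zero 2 hf)
    rw [Complex.ofReal_ne_zero]
    apply inv_ne_zero
    exact (Real.sqrt_pos.mpr (mul_pos (hIpos k) (hIpos l))).ne'
  exact this key.symm
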